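/- For every n ≥ 1, all complex roots of the polynomial L_n(q) are real; equivalently, L_n splits over ℝ. -/

import Mathlib

open Polynomial

open Real in
lemma L_eval (L : ℕ → Polynomial ℝ)
    (hL1 : L 1 = 3)
    (hL2 : L 2 = 2 * X + 7)
    (hrec : ∀ n ≥ 2, L (n + 1) = 3 * L n + 2 * (X - 1) * L (n - 1))
    (θ : ℝ) (hc : Real.cos θ ≠ 0) :
    ∀ n : ℕ, 1 ≤ n →
      2^n * Real.sin θ * Real.cos θ^n * (L n).eval (-(1+9*Real.tan θ^2)/8)
        = 3^n * Real.sin ((n+1)*θ) := by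
  set q : ℝ := -(1+9*Real.tan θ^2)/8 with hq
  have h1 := Real.sin_sq_add_cos_sq θ
  have hq2 : 2*(q-1)*Real.cos θ^2 = -9/4 := by
    rw [hq, Real.tan_eq_sin_div_cos]
    field_simp
    linear_combination (-72) * h1
  have base1 : (L 1).eval q = 3 := by rw [hL1]; simp
  have base2 : (L 2).eval q = 2*q+7 := by rw [hL2]; simp
  suffices h : ∀ n : ℕ, 1 ≤ n →
      (2^n * Real.sin θ * Real.cos θ^n * (L n).eval q = 3^n * Real.sin ((n+1)*θ)) ∧
      (2^(n+1) * Real.sin θ * Real.cos θ^(n+1) * (L (n+1)).eval q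
        = 3^(n+1) * Real.sin ((n+2)*θ)) by
    intro n hn; exact (h n hn).1
  intro n hn
  induction n, hn using Nat.le_induction with
  | base =>
    constructor
    · rw [base1]
      norm_num
      rw [show ((2:ℝ))*θ = 2*θ by ring, Real.sin_two_mul]; ring
    · rw [base2]
      norm_num
      rw [show ((3:ℝ))*θ = 3*θ by ring, Real.sin_three_mul, hq, Real.tan_eq_sin_div_cos]
      field_simp
      linear_combination (216*Real.sin θ) * h1
  | succ n hn ih =>
    obtain ⟨e1, e2⟩ := ih
    push_cast at e1 e2 ⊢
    constructor
    · rw [show ((n:ℝ)+1+1) = (n:ℝ)+2 by ring]; exact e2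
    · have hr := hrec (n+1) (by omega)
      simp only [Nat.add_sub_cancel] at hr
      have heval : (L (n+2)).eval q = 3 * (L (n+1)).eval q + 2*(q-1) * (L n).eval q := by
        rw [hr]; simp only [eval_add, eval_mul, eval_ofNat, eval_sub, eval_X, eval_one]
      have trig : Real.sin (((n:ℝ)+1+2)*θ) =
          2 * Real.cos θ * Real.sin (((n:ℝ)+2)*θ) - Real.sin (((n:ℝ)+1)*θ) := by
        have ha := Real.sin_add (((n:ℝ)+2)*θ) θ
        have hb := Real.sin_sub (((n:ℝ)+2)*θ) θ
        rw [show ((n:ℝ)+1+2)*θ = ((n:ℝ)+2)*θ + θ by ring,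
          show ((n:ℝ)+1)*θ = ((n:ℝ)+2)*θ - θ by ring, ha, hb]
        ring
      have key : (2:ℝ)^(n+1+1) * Real.sin θ * Real.cos θ^(n+1+1) * (L (n+1+1)).eval q
          = 3^(n+1+1) * Real.sin (((n:ℝ)+1+2)*θ) := by
        rw [show n+1+1 = n+2 from rfl, heval, trig]
        calc (2:ℝ)^(n+2) * Real.sin θ * Real.cos θ^(n+2) *
              (3 * (L (n+1)).eval q + 2*(q-1) * (L n).eval q)
            = 3 * (2*Real.cos θ) * (2^(n+1) * Real.sin θ * Real.cos θ^(n+1) * (L (n+1)).eval q)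
              + (2*(q-1)*Real.cos θ^2) * 4 * (2^n * Real.sin θ * Real.cos θ^n * (L n).eval q) := by
              ring
          _ = 3 * (2*Real.cos θ) * (3^(n+1) * Real.sin (((n:ℝ)+2)*θ))
              + (-9/4) * 4 * (3^n * Real.sin (((n:ℝ)+1)*θ)) := by rw [e1, e2, hq2]
          _ = 3^(n+2) * (2 * Real.cos θ * Real.sin (((n:ℝ)+2)*θ) - Real.sin (((n:ℝ)+1)*θ)) := by
              ring
      convert key using 2 <;> push_cast <;> ring

open Real in
lemma L_deg (L : ℕ → Polynomial ℝ)
    (hL1 : L 1 = 3)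
    (hL2 : L 2 = 2 * X + 7)
    (hrec : ∀ n ≥ 2, L (n + 1) = 3 * L n + 2 * (X - 1) * L (n - 1)) :
    ∀ n : ℕ, 1 ≤ n → (L n).natDegree ≤ n/2 ∧ 0 < (L n).coeff (n/2) := by
  have h2c : ∀ (r : Polynomial ℝ) (k : ℕ), ((2:Polynomial ℝ) * r).coeff k = 2 * r.coeff k := by
    intro r k
    rw [(map_ofNat C 2).symm, coeff_C_mul]
  have h3c : ∀ (r : Polynomial ℝ) (k : ℕ), ((3:Polynomial ℝ) * r).coeff k = 3 * r.coeff k := by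
    intro r k
    rw [(map_ofNat C 3).symm, coeff_C_mul]
  suffices h : ∀ n : ℕ, 1 ≤ n →
      ((L n).natDegree ≤ n/2 ∧ 0 < (L n).coeff (n/2)) ∧
      ((L (n+1)).natDegree ≤ (n+1)/2 ∧ 0 < (L (n+1)).coeff ((n+1)/2)) by
    intro n hn; exact (h n hn).1
  intro n hn
  induction n, hn using Nat.le_induction with
  | base =>
    refine ⟨⟨?_, ?_⟩, ?_, ?_⟩
    · rw [hL1]; simp
    · rw [hL1]; norm_num
    · rw [hL2]; compute_degree
    · rw [hL2]; norm_num
  | succ n hn ih =>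
    obtain ⟨⟨d1, c1⟩, d2, c2⟩ := ih
    have hr := hrec (n+1) (by omega)
    simp only [Nat.add_sub_cancel] at hr
    have hsplit : L (n+1+1) = 3 * L (n+1) + (2 * (X * L n) - 2 * L n) := by
      rw [hr]; ring
    refine ⟨⟨d2, c2⟩, ?_, ?_⟩
    · rw [hsplit]
      refine le_trans (natDegree_add_le _ _) ?_
      refine max_le ?_ ?_
      · refine le_trans (natDegree_mul_le) ?_
        have : (3 : Polynomial ℝ).natDegree = 0 := natDegree_ofNat _
        omega
      · refine le_trans (natDegree_sub_le _ _) ?_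
        refine max_le ?_ ?_
        · refine le_trans (natDegree_mul_le) ?_
          have h2 : (2 : Polynomial ℝ).natDegree = 0 := natDegree_ofNat _
          have hx : (X * L n).natDegree ≤ 1 + (L n).natDegree := by
            refine le_trans (natDegree_mul_le) ?_
            simp [natDegree_X]
          omega
        · refine le_trans (natDegree_mul_le) ?_
          have h2 : (2 : Polynomial ℝ).natDegree = 0 := natDegree_ofNat _
          omega
    · rw [hsplit]
      rcases Nat.even_or_odd n with ⟨m, hm⟩ | ⟨m, hm⟩
      · -- n = 2m even: (n+2)/2 = m+1, coeff = 2 * coeff (L n) m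
        subst hm
        have e1 : (m+m+1+1)/2 = m+1 := by omega
        have e2 : (m+m+1)/2 = m := by omega
        have e3 : (m+m)/2 = m := by omega
        rw [e1]
        rw [e2] at c2 d2
        rw [e3] at c1 d1
        rw [coeff_add, coeff_sub, h3c, h2c, h2c, coeff_X_mul]
        have z1 : (L (m+m+1)).coeff (m+1) = 0 := coeff_eq_zero_of_natDegree_lt (by omega)
        have z2 : (L (m+m)).coeff (m+1) = 0 := coeff_eq_zero_of_natDegree_lt (by omega)
        rw [z1, z2]
        linarith
      · -- n = 2m+1 odd: (n+2)/2 = m+1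
        subst hm
        have e1 : (2*m+1+1+1)/2 = m+1 := by omega
        have e2 : (2*m+1+1)/2 = m+1 := by omega
        have e3 : (2*m+1)/2 = m := by omega
        rw [e1]
        rw [e2] at c2 d2
        rw [e3] at c1 d1
        rw [coeff_add, coeff_sub, h3c, h2c, h2c, coeff_X_mul]
        have z2 : (L (2*m+1)).coeff (m+1) = 0 := coeff_eq_zero_of_natDegree_lt (by omega)
        rw [z2]
        linarith

open Real in
theorem L_real_rooted (L : ℕ → Polynomial ℝ)
    (hL1 : L 1 = 3)
    (hL2 : L 2 = 2 * X + 7)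
    (hrec : ∀ n ≥ 2, L (n + 1) = 3 * L n + 2 * (X - 1) * L (n - 1)) :
    ∀ n ≥ 1, ((L n).map (RingHom.id ℝ)).Splits := by
  intro n hn
  obtain ⟨hdle, hcoeff⟩ := L_deg L hL1 hL2 hrec n hn
  set d := n / 2 with hd
  have hne : L n ≠ 0 := fun h => by simp [h] at hcoeff
  have hdeg : (L n).natDegree = d :=
    le_antisymm hdle (le_natDegree_of_ne_zero (ne_of_gt hcoeff))
  -- the angles
  set θf : ℕ → ℝ := fun k => k * π / (n + 1) with hθf
  have hn1 : (0:ℝ) < (n:ℝ) + 1 := by positivity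
  have hθmem : ∀ k ∈ Finset.Icc 1 d, 0 < θf k ∧ θf k < π / 2 := by
    intro k hk
    rw [Finset.mem_Icc] at hk
    obtain ⟨hk1, hk2⟩ := hk
    have h2k : 2 * k ≤ n := by omega
    constructor
    · have : (0:ℝ) < (k:ℝ) * π := by
        have : (1:ℝ) ≤ (k:ℝ) := by exact_mod_cast hk1
        nlinarith [Real.pi_pos]
      exact div_pos this hn1
    · rw [div_lt_iff₀ hn1]
      have h2k' : (2:ℝ) * k < (n:ℝ) + 1 := by exact_mod_cast by omega
      nlinarith [Real.pi_pos]
  have hcosne : ∀ k ∈ Finset.Icc 1 d, Real.cos (θf k) ≠ 0 := by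
    intro k hk
    obtain ⟨h1, h2⟩ := hθmem k hk
    exact (Real.cos_pos_of_mem_Ioo ⟨by linarith [Real.pi_pos], h2⟩).ne'
  have hsinne : ∀ k ∈ Finset.Icc 1 d, Real.sin (θf k) ≠ 0 := by
    intro k hk
    obtain ⟨h1, h2⟩ := hθmem k hk
    exact (Real.sin_pos_of_pos_of_lt_pi h1 (by linarith [Real.pi_pos])).ne'
  -- roots
  set f : ℕ → ℝ := fun k => -(1 + 9 * Real.tan (θf k) ^ 2) / 8 with hf
  have hroot : ∀ k ∈ Finset.Icc 1 d, (L n).eval (f k) = 0 := by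
    intro k hk
    have he := L_eval L hL1 hL2 hrec (θf k) (hcosne k hk) n hn
    have hsin0 : Real.sin ((n + 1) * θf k) = 0 := by
      have : ((n:ℝ) + 1) * θf k = k * π := by
        simp only [hθf]
        field_simp
      rw [this]
      exact Real.sin_nat_mul_pi k
    rw [hsin0, mul_zero] at he
    have hfac : (2:ℝ)^n * Real.sin (θf k) * Real.cos (θf k)^n ≠ 0 := by
      exact mul_ne_zero (mul_ne_zero (by positivity) (hsinne k hk)) (pow_ne_zero _ (hcosne k hk))
    exact (mul_eq_zero.mp he).resolve_left hfac
  have hinj : Set.InjOn f (Finset.Icc 1 d) := by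
    intro j hj k hk hjk
    simp only [Finset.coe_Icc, Set.mem_Icc] at hj hk
    have hj' := hθmem j (Finset.mem_Icc.mpr hj)
    have hk' := hθmem k (Finset.mem_Icc.mpr hk)
    have htanj : 0 < Real.tan (θf j) :=
      Real.tan_pos_of_pos_of_lt_pi_div_two hj'.1 hj'.2
    have htank : 0 < Real.tan (θf k) :=
      Real.tan_pos_of_pos_of_lt_pi_div_two hk'.1 hk'.2
    have hsq : Real.tan (θf j) ^ 2 = Real.tan (θf k) ^ 2 := by
      simp only [hf] at hjk
      linarith [hjk]
    have htan : Real.tan (θf j) = Real.tan (θf k) := by nlinarith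
    have hθeq : θf j = θf k := by
      exact Real.strictMonoOn_tan.injOn
        ⟨by linarith [Real.pi_pos, hj'.1], hj'.2⟩
        ⟨by linarith [Real.pi_pos, hk'.1], hk'.2⟩ htan
    have h' : (j:ℝ) * π / (n+1) = (k:ℝ) * π / (n+1) := hθeq
    field_simp [Real.pi_ne_zero] at h'
    exact_mod_cast h'
  set S : Finset ℝ := (Finset.Icc 1 d).image f with hS
  have hcardS : S.card = d := by
    rw [hS, Finset.card_image_of_injOn hinj, Nat.card_Icc]
    omega
  have hsub : S ⊆ (L n).roots.toFinset := by
    intro x hx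
    rw [hS, Finset.mem_image] at hx
    obtain ⟨k, hk, rfl⟩ := hx
    rw [Multiset.mem_toFinset, mem_roots hne]
    exact hroot k hk
  have hge : d ≤ Multiset.card (L n).roots := by
    calc d = S.card := hcardS.symm
      _ ≤ (L n).roots.toFinset.card := Finset.card_le_card hsub
      _ ≤ Multiset.card (L n).roots := Multiset.toFinset_card_le _
  have hle : Multiset.card (L n).roots ≤ d := hdeg ▸ (L n).card_roots'
  rw [map_id, splits_iff_card_roots, hdeg]
  omega
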